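/- Let g : ℝ → ℝ satisfy g(0) = 0 and g'(t) = (1 + 2 g(t)^2)^(-1/2) for t ≥ 0, extended oddly. Then for all t > 0, (1/2) g(t) ≤ t g'(t) ≤ g(t). -/

import Mathlib

theorem stmt_1 (g : ℝ → ℝ) (hg0 : g 0 = 0)
    (hgd : ∀ t : ℝ, 0 ≤ t → HasDerivAt g (1 / Real.sqrt (1 + 2 * g t ^ 2)) t)
    (hodd : ∀ t : ℝ, g (-t) = - g t) :
    ∀ t : ℝ, 0 < t → (1 / 2) * g t ≤ t * deriv g t ∧ t * deriv g t ≤ g t := by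
  have hpos : ∀ t : ℝ, (0:ℝ) < 1 + 2 * g t ^ 2 := fun t => by positivity
  have hs : ∀ t : ℝ, 0 < Real.sqrt (1 + 2 * g t ^ 2) :=
    fun t => Real.sqrt_pos.mpr (hpos t)
  have hs2 : ∀ t : ℝ, Real.sqrt (1 + 2 * g t ^ 2) ^ 2 = 1 + 2 * g t ^ 2 :=
    fun t => Real.sq_sqrt (hpos t).le
  set φ : ℝ → ℝ := fun t => g t * Real.sqrt (1 + 2 * g t ^ 2) with hφ
  have hφd : ∀ t : ℝ, 0 ≤ t →
      HasDerivAt φ ((1 + 4 * g t ^ 2) / (1 + 2 * g t ^ 2)) t := by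
    intro t ht
    have hg := hgd t ht
    have hinner : HasDerivAt (fun t => 1 + 2 * g t ^ 2)
        (2 * (2 * g t * (1 / Real.sqrt (1 + 2 * g t ^ 2)))) t := by
      simpa [mul_comm, mul_assoc, mul_left_comm] using ((hg.pow 2).const_mul 2).const_add 1
    have hsqrt := hinner.sqrt (ne_of_gt (hpos t))
    have h := hg.mul hsqrt
    refine h.congr_deriv ?_
    have hsne : Real.sqrt (1 + 2 * g t ^ 2) ≠ 0 := (hs t).ne'
    have h2 := hs2 t
    field_simp
    nlinarith [hs2 t, hs t]
  -- derivative bounds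
  have hDlb : ∀ t : ℝ, (1:ℝ) ≤ (1 + 4 * g t ^ 2) / (1 + 2 * g t ^ 2) := by
    intro t
    rw [le_div_iff₀ (hpos t)]
    nlinarith [sq_nonneg (g t)]
  have hDub : ∀ t : ℝ, (1 + 4 * g t ^ 2) / (1 + 2 * g t ^ 2) ≤ 2 := by
    intro t
    rw [div_le_iff₀ (hpos t)]
    nlinarith [sq_nonneg (g t)]
  -- monotonicity of φ - id and 2·id - φ on Ici 0
  have hcont : ∀ t ∈ Set.Ici (0:ℝ), ContinuousAt φ t :=
    fun t ht => (hφd t ht).continuousAt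
  have key : ∀ t : ℝ, 0 < t → t ≤ φ t ∧ φ t ≤ 2 * t := by
    intro t ht
    have hmono1 : MonotoneOn (fun t => φ t - t) (Set.Ici 0) := by
      apply monotoneOn_of_deriv_nonneg (convex_Ici 0)
      · exact ContinuousOn.sub (fun x hx => (hcont x hx).continuousWithinAt)
          continuousOn_id
      · intro x hx
        rw [interior_Ici] at hx
        have hD : HasDerivAt (fun t => φ t - t)
            ((1 + 4 * g x ^ 2) / (1 + 2 * g x ^ 2) - 1) x := by
          exact (hφd x hx.le).sub (hasDerivAt_id x)
        exact hD.differentiableAt.differentiableWithinAt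
      · intro x hx
        rw [interior_Ici] at hx
        have hD : HasDerivAt (fun t => φ t - t)
            ((1 + 4 * g x ^ 2) / (1 + 2 * g x ^ 2) - 1) x := by
          exact (hφd x hx.le).sub (hasDerivAt_id x)
        rw [hD.deriv]
        linarith [hDlb x]
    have hmono2 : MonotoneOn (fun t => 2 * t - φ t) (Set.Ici 0) := by
      apply monotoneOn_of_deriv_nonneg (convex_Ici 0)
      · exact (continuousOn_const.mul continuousOn_id).sub
          (fun x hx => (hcont x hx).continuousWithinAt)
      · intro x hx
        rw [interior_Ici] at hx
        have hD : HasDerivAt (fun t => 2 * t - φ t)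
            (2 - (1 + 4 * g x ^ 2) / (1 + 2 * g x ^ 2)) x := by
          exact (((hasDerivAt_id x).const_mul 2).sub (hφd x hx.le)).congr_deriv (by ring)
        exact hD.differentiableAt.differentiableWithinAt
      · intro x hx
        rw [interior_Ici] at hx
        have hD : HasDerivAt (fun t => 2 * t - φ t)
            (2 - (1 + 4 * g x ^ 2) / (1 + 2 * g x ^ 2)) x := by
          exact (((hasDerivAt_id x).const_mul 2).sub (hφd x hx.le)).congr_deriv (by ring)
        rw [hD.deriv]
        linarith [hDub x]
    have hφ0 : φ 0 = 0 := by simp [hφ, hg0]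
    have h1 := hmono1 Set.self_mem_Ici (Set.mem_Ici.mpr ht.le) ht.le
    have h2 := hmono2 Set.self_mem_Ici (Set.mem_Ici.mpr ht.le) ht.le
    simp only [hφ0] at h1 h2
    constructor <;> [linarith; linarith]
  intro t ht
  have hd : deriv g t = 1 / Real.sqrt (1 + 2 * g t ^ 2) := (hgd t ht.le).deriv
  obtain ⟨h1, h2⟩ := key t ht
  simp only [hφ] at h1 h2
  have hst := hs t
  rw [hd]
  constructor
  · rw [mul_one_div, le_div_iff₀ hst]
    nlinarith
  · rw [mul_one_div, div_le_iff₀ hst]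
    nlinarith
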